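/- If γ² > 1/2 then the one-step replica symmetry breaking functional satisfies inf_{x∈[0,1]} f(x) < log 2 + γ²/2 = f(0), i.e. the annealed value is strictly beaten. -/

import Mathlib

open MeasureTheory ProbabilityTheory Real Filter Topology
open scoped ENNReal NNReal

noncomputable section

def stdGauss : Measure ℝ := gaussianReal 0 1

instance : IsProbabilityMeasure stdGauss :=
  inferInstanceAs (IsProbabilityMeasure (gaussianReal 0 1))

lemma aux_stdGauss_eq : stdGauss = volume.withDensity (fun x => ENNReal.ofReal (gaussianPDFReal 0 1 x)) := by
  rw [stdGauss, gaussianReal_of_var_ne_zero _ one_ne_zero]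
  rfl

lemma aux_integral_eq (f : ℝ → ℝ) :
    ∫ x, f x ∂stdGauss = ∫ x, gaussianPDFReal 0 1 x * f x := by
  rw [aux_stdGauss_eq]
  have hmeas : Measurable (fun x => (gaussianPDFReal 0 1 x).toNNReal) :=
    (measurable_gaussianPDFReal 0 1).real_toNNReal
  rw [show (fun x => ENNReal.ofReal (gaussianPDFReal 0 1 x))
      = (fun x => ((gaussianPDFReal 0 1 x).toNNReal : ℝ≥0∞)) from rfl]
  rw [integral_withDensity_eq_integral_smul hmeas f]
  congr 1; funext x
  rw [NNReal.smul_def, Real.coe_toNNReal _ (gaussianPDFReal_nonneg 0 1 x), smul_eq_mul]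

lemma aux_integrable_iff (f : ℝ → ℝ) :
    Integrable f stdGauss ↔ Integrable (fun x => gaussianPDFReal 0 1 x * f x) volume := by
  rw [aux_stdGauss_eq]
  have hmeas : Measurable (fun x => (gaussianPDFReal 0 1 x).toNNReal) :=
    (measurable_gaussianPDFReal 0 1).real_toNNReal
  rw [show (fun x => ENNReal.ofReal (gaussianPDFReal 0 1 x))
      = (fun x => ((gaussianPDFReal 0 1 x).toNNReal : ℝ≥0∞)) from rfl]
  rw [integrable_withDensity_iff_integrable_smul hmeas]
  apply integrable_congr
  filter_upwards with x
  rw [NNReal.smul_def, Real.coe_toNNReal _ (gaussianPDFReal_nonneg 0 1 x), smul_eq_mul]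

lemma aux_pdf_mul_exp (t x : ℝ) :
    gaussianPDFReal 0 1 x * Real.exp (t*x)
      = (Real.sqrt (2*π))⁻¹ * Real.exp (t^2/2) * Real.exp (-(1/2) * (x - t)^2) := by
  rw [gaussianPDFReal_def]
  push_cast
  rw [mul_one, sub_zero]
  rw [mul_assoc, ← Real.exp_add, mul_assoc, ← Real.exp_add]
  congr 2
  ring

lemma aux_integrable_exp (t : ℝ) : Integrable (fun x => Real.exp (t*x)) stdGauss := by
  rw [aux_integrable_iff]
  have h1 : Integrable (fun x : ℝ => Real.exp (-(1/2) * (x - t)^2)) volume := by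
    have := integrable_exp_neg_mul_sq (b := (1/2:ℝ)) (by norm_num)
    exact this.comp_sub_right t
  have h2 := h1.const_mul ((Real.sqrt (2*π))⁻¹ * Real.exp (t^2/2))
  apply h2.congr
  filter_upwards with x
  rw [aux_pdf_mul_exp t x]

lemma aux_integral_exp (t : ℝ) : ∫ x, Real.exp (t*x) ∂stdGauss = Real.exp (t^2/2) := by
  rw [aux_integral_eq]
  have hrw : ∀ x : ℝ, gaussianPDFReal 0 1 x * Real.exp (t*x)
      = (Real.sqrt (2*π))⁻¹ * Real.exp (t^2/2) * Real.exp (-(1/2) * (x - t)^2) :=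
    aux_pdf_mul_exp t
  simp_rw [hrw]
  rw [MeasureTheory.integral_const_mul]
  have htrans : ∫ x : ℝ, Real.exp (-(1/2) * (x - t)^2)
      = ∫ x : ℝ, Real.exp (-(1/2) * x^2) := by
    have := MeasureTheory.integral_add_right_eq_self
      (μ := volume) (fun x : ℝ => Real.exp (-(1/2) * x^2)) (-t)
    rw [← this]
    simp_rw [sub_eq_add_neg]
  rw [htrans, integral_gaussian]
  have hπ : (0:ℝ) < 2*π := by positivity
  rw [show π / (1/2 : ℝ) = 2*π by ring]
  field_simp

/-- helper: nonneg of function vanishing at 1 with nonneg derivative on `Ici 1`. -/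
lemma aux_nonneg_of_deriv {f f' : ℝ → ℝ}
    (hf : ∀ u ∈ Set.Ici (1:ℝ), HasDerivAt f (f' u) u)
    (h0 : f 1 = 0) (h' : ∀ u ∈ Set.Ici (1:ℝ), 0 ≤ f' u) {u : ℝ} (hu : 1 ≤ u) : 0 ≤ f u := by
  have hmono : MonotoneOn f (Set.Ici (1:ℝ)) := by
    refine monotoneOn_of_deriv_nonneg (convex_Ici 1)
      (fun x hx => (hf x hx).continuousAt.continuousWithinAt)
      (fun x hx => ?_) (fun x hx => ?_)
    · rw [interior_Ici] at hx
      exact (hf x (Set.mem_Ici.2 (le_of_lt (Set.mem_Ioi.1 hx)))).differentiableAt.differentiableWithinAt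
    · rw [interior_Ici] at hx
      rw [(hf x (Set.mem_Ici.2 (le_of_lt (Set.mem_Ioi.1 hx)))).deriv]
      exact h' x (Set.mem_Ici.2 (le_of_lt (Set.mem_Ioi.1 hx)))
  have := hmono (Set.self_mem_Ici) (Set.mem_Ici.2 hu) hu
  rwa [h0] at this

lemma aux_g_nonneg {ζ : ℝ} (hζ0 : 0 < ζ) (hζ1 : ζ < 1) {u : ℝ} (hu : 1 ≤ u) :
    0 ≤ 1 - u ^ (ζ-1) - (1-ζ) * ((u-1) * u ^ (ζ-2)) := by
  have key : ∀ w ∈ Set.Ici (1:ℝ),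
      HasDerivAt (fun u => 1 - u ^ (ζ-1) - (1-ζ) * ((u-1) * u ^ (ζ-2)))
        ((1-ζ)*(2-ζ)*((w-1) * w ^ (ζ-3))) w := by
    intro w hw
    have hw0 : w ≠ 0 := by intro h; rw [h] at hw; norm_num at hw
    have h1 : HasDerivAt (fun u : ℝ => u ^ (ζ-1)) ((ζ-1) * w ^ (ζ-1-1)) w :=
      Real.hasDerivAt_rpow_const (Or.inl hw0)
    have h2 : HasDerivAt (fun u : ℝ => u ^ (ζ-2)) ((ζ-2) * w ^ (ζ-2-1)) w :=
      Real.hasDerivAt_rpow_const (Or.inl hw0)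
    have hwpos : (0:ℝ) < w := lt_of_lt_of_le one_pos hw
    have h3 : HasDerivAt (fun u : ℝ => u - 1) 1 w := (hasDerivAt_id w).sub_const 1
    have h4 := ((h3.mul h2).const_mul (1-ζ))
    have h5 := ((hasDerivAt_const w (1:ℝ)).sub h1).sub h4
    refine h5.congr_deriv ?_
    rw [show ζ-1-1 = ζ-2 by ring, show ζ-2-1 = ζ-3 by ring]
    have e1 : w ^ (ζ-2) = w * w ^ (ζ-3) := by
      rw [show ζ-2 = 1 + (ζ-3) by ring, Real.rpow_add hwpos, Real.rpow_one]
    rw [e1]; ring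
  have h0 : (fun u : ℝ => 1 - u ^ (ζ-1) - (1-ζ) * ((u-1) * u ^ (ζ-2))) 1 = 0 := by
    simp [Real.one_rpow]
  refine aux_nonneg_of_deriv key h0 (fun w hw => ?_) hu
  have : (0:ℝ) ≤ (w-1) * w ^ (ζ-3) := by
    apply mul_nonneg (by linarith [hw.out]) (Real.rpow_nonneg (by linarith [hw.out]) _)
  apply mul_nonneg (mul_nonneg (by linarith) (by linarith)) this

/-- second-order Bernoulli: for `u ≥ 1`, `0 < ζ < 1`:
`u^ζ ≤ 1 + ζ(u-1) - (ζ(1-ζ)/2)(u-1)² u^(ζ-2)` -/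
lemma aux_bernoulli2 {ζ : ℝ} (hζ0 : 0 < ζ) (hζ1 : ζ < 1) {u : ℝ} (hu : 1 ≤ u) :
    u ^ ζ ≤ 1 + ζ*(u-1) - (ζ*(1-ζ)/2) * ((u-1)^2 * u ^ (ζ-2)) := by
  have key : ∀ w ∈ Set.Ici (1:ℝ),
      HasDerivAt (fun u => 1 + ζ*(u-1) - u ^ ζ - (ζ*(1-ζ)/2) * ((u-1)^2 * u ^ (ζ-2)))
        (ζ*(1 - w ^ (ζ-1) - (1-ζ) * ((w-1) * w ^ (ζ-2)))
          + (ζ*(1-ζ)/2)*(2-ζ) * ((w-1)^2 * w ^ (ζ-3))) w := by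
    intro w hw
    have hw0 : w ≠ 0 := by intro h; rw [h] at hw; norm_num at hw
    have h1 : HasDerivAt (fun u : ℝ => u ^ ζ) (ζ * w ^ (ζ-1)) w :=
      Real.hasDerivAt_rpow_const (Or.inl hw0)
    have h2 : HasDerivAt (fun u : ℝ => u ^ (ζ-2)) ((ζ-2) * w ^ (ζ-2-1)) w :=
      Real.hasDerivAt_rpow_const (Or.inl hw0)
    have hwpos : (0:ℝ) < w := lt_of_lt_of_le one_pos hw
    have h3 : HasDerivAt (fun u : ℝ => u - 1) 1 w := (hasDerivAt_id w).sub_const 1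
    have h3sq : HasDerivAt (fun u : ℝ => (u-1)^2) (2*(w-1)) w := by
      have := h3.pow 2
      simp at this; exact this
    have h4 := ((h3sq.mul h2).const_mul (ζ*(1-ζ)/2))
    have h5 := (((hasDerivAt_const w (1:ℝ)).add (h3.const_mul ζ)).sub h1).sub h4
    refine h5.congr_deriv ?_
    rw [show ζ-2-1 = ζ-3 by ring]
    have e1 : w ^ (ζ-2) = w * w ^ (ζ-3) := by
      rw [show ζ-2 = 1 + (ζ-3) by ring, Real.rpow_add hwpos, Real.rpow_one]
    have e2 : w ^ (ζ-1) = w * w ^ (ζ-2) := by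
      rw [show ζ-1 = 1 + (ζ-2) by ring, Real.rpow_add hwpos, Real.rpow_one]
    rw [e2, e1]; ring
  have h0 : (fun u : ℝ => 1 + ζ*(u-1) - u ^ ζ - (ζ*(1-ζ)/2) * ((u-1)^2 * u ^ (ζ-2))) 1 = 0 := by
    simp [Real.one_rpow]
  have h := aux_nonneg_of_deriv key h0 (fun w hw => ?_) hu
  · linarith [h]
  · have hg := aux_g_nonneg hζ0 hζ1 hw.out
    have h2 : (0:ℝ) ≤ (ζ*(1-ζ)/2)*(2-ζ) * ((w-1)^2 * w ^ (ζ-3)) := by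
      have : (0:ℝ) ≤ (w-1)^2 * w ^ (ζ-3) :=
        mul_nonneg (sq_nonneg _) (Real.rpow_nonneg (by linarith [hw.out]) _)
      have hzz : (0:ℝ) < ζ*(1-ζ) := mul_pos hζ0 (by linarith)
      have hc : (0:ℝ) ≤ (ζ*(1-ζ)/2)*(2-ζ) := by nlinarith
      exact mul_nonneg hc this
    nlinarith [mul_nonneg hζ0.le hg]

-- sinh t ≤ t * exp t for t ≥ 0
lemma aux_sinh_le {t : ℝ} (ht : 0 ≤ t) : Real.sinh t ≤ t * Real.exp t := by
  rw [Real.sinh_eq]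
  have h := Real.add_one_le_exp (-(2*t))
  have h2 : Real.exp (-t) = Real.exp t * Real.exp (-(2*t)) := by
    rw [← Real.exp_add]; ring_nf
  rw [h2]
  nlinarith [Real.exp_pos t, Real.exp_pos (-(2*t))]

-- cosh y - 1 ≤ y^2/2 * exp |y|
lemma aux_cosh_sub_one_le (y : ℝ) : Real.cosh y - 1 ≤ y^2/2 * Real.exp |y| := by
  have hid : Real.cosh y = 1 + 2 * Real.sinh (y/2) ^ 2 := by
    have h1 := Real.cosh_two_mul (y/2)
    have h2 := Real.cosh_sq (y/2)
    rw [show 2*(y/2) = y by ring] at h1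
    rw [h1, h2]; ring
  have habs : Real.sinh (y/2) ^ 2 = Real.sinh (|y|/2) ^ 2 := by
    rw [show |y|/2 = |y/2| by rw [abs_div]; norm_num]
    rcases abs_choice (y/2) with h | h
    · rw [h]
    · rw [h, Real.sinh_neg, neg_sq]
  have hb : Real.sinh (|y|/2) ≤ (|y|/2) * Real.exp (|y|/2) := aux_sinh_le (by positivity)
  have hs0 : 0 ≤ Real.sinh (|y|/2) := by
    have := Real.sinh_le_sinh.2 (by positivity : (0:ℝ) ≤ |y|/2)
    simpa using this
  have hsq : Real.sinh (|y|/2) ^ 2 ≤ ((|y|/2) * Real.exp (|y|/2))^2 := by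
    apply pow_le_pow_left₀ hs0 hb
  have hexp : ((|y|/2) * Real.exp (|y|/2))^2 = y^2/4 * Real.exp |y| := by
    rw [mul_pow, div_pow, sq_abs, sq (Real.exp (|y|/2)), ← Real.exp_add,
      show |y|/2 + |y|/2 = |y| by ring]
    ring
  rw [hid, habs]
  nlinarith [hsq, hexp]

-- cosh y ≤ exp |y|
lemma aux_cosh_le_exp_abs (y : ℝ) : Real.cosh y ≤ Real.exp |y| := by
  rw [← Real.cosh_abs, Real.cosh_eq]
  have h1 : Real.exp (-|y|) ≤ Real.exp |y| := Real.exp_le_exp.2 (by linarith [abs_nonneg y])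
  linarith

-- u^5 ≤ 120 * exp u for u ≥ 0
lemma aux_pow5_le {u : ℝ} (hu : 0 ≤ u) : u^5 ≤ 120 * Real.exp u := by
  have h := Real.sum_le_exp_of_nonneg hu 6
  have hsum : ∑ i ∈ Finset.range 6, u ^ i / i.factorial
      = 1 + u + u^2/2 + u^3/6 + u^4/24 + u^5/120 := by
    norm_num [Finset.sum_range_succ, Nat.factorial]
  rw [hsum] at h
  nlinarith [pow_nonneg hu 2, pow_nonneg hu 3, pow_nonneg hu 4]

-- cosh y ^ (ζ - 2) ≥ 1 - 2 * |y|
lemma aux_rpow_lower {ζ : ℝ} (hζ0 : 0 < ζ) (hζ1 : ζ < 1) (y : ℝ) :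
    1 - 2*|y| ≤ Real.cosh y ^ (ζ - 2) := by
  have hc : (0:ℝ) < Real.cosh y := Real.cosh_pos y
  rw [Real.rpow_def_of_pos hc]
  have hL0 : 0 ≤ Real.log (Real.cosh y) := Real.log_nonneg (Real.one_le_cosh y)
  have hL1 : Real.log (Real.cosh y) ≤ |y| := by
    rw [Real.log_le_iff_le_exp hc]
    exact aux_cosh_le_exp_abs y
  have h := Real.add_one_le_exp (Real.log (Real.cosh y) * (ζ-2))
  have h2 : -(2*|y|) ≤ Real.log (Real.cosh y) * (ζ-2) := by nlinarith
  linarith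

-- main pointwise bound
lemma aux_pointwise {ζ : ℝ} (hζ0 : 0 < ζ) (hζ1 : ζ < 1) (y : ℝ)
    (hb2 : Real.cosh y ^ ζ ≤ 1 + ζ*(Real.cosh y - 1)
      - (ζ*(1-ζ)/2) * ((Real.cosh y - 1)^2 * Real.cosh y ^ (ζ-2))) :
    Real.cosh y ^ ζ ≤ 1 + ζ*(Real.cosh y - 1)
      - (ζ*(1-ζ)/2) * ((Real.cosh y - 1)^2 - 2 * (|y| * (Real.cosh y - 1)^2)) := by
  have hlow := aux_rpow_lower hζ0 hζ1 y
  have hsq : (0:ℝ) ≤ (Real.cosh y - 1)^2 := sq_nonneg _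
  have hc : (0:ℝ) ≤ ζ*(1-ζ)/2 := by nlinarith
  have key : (Real.cosh y - 1)^2 - 2 * (|y| * (Real.cosh y - 1)^2)
      ≤ (Real.cosh y - 1)^2 * Real.cosh y ^ (ζ-2) := by
    nlinarith
  nlinarith

lemma aux_integrable_cosh (t : ℝ) : Integrable (fun x => Real.cosh (t*x)) stdGauss := by
  have h := ((aux_integrable_exp t).add (aux_integrable_exp (-t))).div_const 2
  apply h.congr
  filter_upwards with x
  simp [Real.cosh_eq, neg_mul]

lemma aux_integral_cosh (t : ℝ) : ∫ x, Real.cosh (t*x) ∂stdGauss = Real.exp (t^2/2) := by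
  have hrw : (fun x => Real.cosh (t*x)) = fun x => (Real.exp (t*x) + Real.exp ((-t)*x))/2 := by
    funext x; rw [Real.cosh_eq, neg_mul]
  calc ∫ x, Real.cosh (t*x) ∂stdGauss
      = ∫ x, (Real.exp (t*x) + Real.exp ((-t)*x))/2 ∂stdGauss := by rw [hrw]
    _ = ((∫ x, Real.exp (t*x) ∂stdGauss) + ∫ x, Real.exp ((-t)*x) ∂stdGauss)/2 := by
        rw [integral_div, integral_add (aux_integrable_exp t) (aux_integrable_exp (-t))]
    _ = Real.exp (t^2/2) := by
        rw [aux_integral_exp, aux_integral_exp, show (-t)^2 = t^2 by ring]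
        ring

lemma aux_cont_coshrpow (a ζ : ℝ) : Continuous (fun x => Real.cosh (a*x) ^ ζ) := by
  apply Continuous.rpow_const
  · exact Real.continuous_cosh.comp (continuous_const.mul continuous_id)
  · intro x; exact Or.inl (ne_of_gt (Real.cosh_pos _))

lemma aux_integrable_coshrpow {ζ : ℝ} (hζ0 : 0 < ζ) (hζ1 : ζ < 1) (a : ℝ) :
    Integrable (fun x => Real.cosh (a*x) ^ ζ) stdGauss := by
  apply (aux_integrable_cosh a).mono' ((aux_cont_coshrpow a ζ).aestronglyMeasurable)
  filter_upwards with x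
  rw [Real.norm_eq_abs, abs_of_nonneg (Real.rpow_nonneg (Real.cosh_pos _).le _)]
  calc Real.cosh (a*x) ^ ζ ≤ Real.cosh (a*x) ^ (1:ℝ) :=
        Real.rpow_le_rpow_of_exponent_le (Real.one_le_cosh _) (by linarith)
    _ = Real.cosh (a*x) := Real.rpow_one _

lemma aux_one_le_integral_coshrpow {ζ : ℝ} (hζ0 : 0 < ζ) (hζ1 : ζ < 1) (a : ℝ) :
    1 ≤ ∫ x, Real.cosh (a*x) ^ ζ ∂stdGauss := by
  have h1 : (1:ℝ) = ∫ _x, (1:ℝ) ∂stdGauss := by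
    rw [integral_const]
    simp [stdGauss]
  rw [h1]
  apply integral_mono (integrable_const 1) (aux_integrable_coshrpow hζ0 hζ1 a)
  intro x
  have := Real.one_le_cosh (a*x)
  calc (1:ℝ) = 1 ^ ζ := (Real.one_rpow ζ).symm
    _ ≤ Real.cosh (a*x) ^ ζ := Real.rpow_le_rpow (by norm_num) this hζ0.le

lemma aux_s2_rw (a x : ℝ) : (Real.cosh (a*x) - 1)^2
    = Real.cosh ((2*a)*x)/2 - 2*Real.cosh (a*x) + 3/2 := by
  have h1 := Real.cosh_two_mul (a*x)
  have h2 := Real.cosh_sq (a*x)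
  rw [show (2*a)*x = 2*(a*x) by ring, h1]
  linear_combination h2/2

lemma aux_integrable_s2 (a : ℝ) :
    Integrable (fun x => (Real.cosh (a*x) - 1)^2) stdGauss := by
  have h : Integrable (fun x => Real.cosh ((2*a)*x)/2 - 2*Real.cosh (a*x) + 3/2) stdGauss :=
    (((aux_integrable_cosh (2*a)).div_const 2).sub ((aux_integrable_cosh a).const_mul 2)).add
      (integrable_const _)
  apply h.congr
  filter_upwards with x
  rw [aux_s2_rw]

lemma aux_integral_s2 (a : ℝ) : ∫ x, (Real.cosh (a*x) - 1)^2 ∂stdGauss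
    = Real.exp ((2*a)^2/2)/2 - 2*Real.exp (a^2/2) + 3/2 := by
  have hrw : (fun x => (Real.cosh (a*x) - 1)^2)
      = fun x => Real.cosh ((2*a)*x)/2 - 2*Real.cosh (a*x) + 3/2 := by
    funext x; rw [aux_s2_rw]
  have i1 : Integrable (fun x => Real.cosh ((2*a)*x)/2) stdGauss :=
    (aux_integrable_cosh (2*a)).div_const 2
  have i2 : Integrable (fun x => 2*Real.cosh (a*x)) stdGauss := by
    simpa using (aux_integrable_cosh a).const_mul 2
  have i12 : Integrable (fun x => Real.cosh ((2*a)*x)/2 - 2*Real.cosh (a*x)) stdGauss := i1.sub i2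
  rw [hrw, integral_add i12 (integrable_const _), integral_sub i1 i2, integral_div,
    MeasureTheory.integral_const_mul, aux_integral_cosh, aux_integral_cosh, integral_const]
  simp

lemma aux_exp_abs_le (c x : ℝ) : Real.exp (c*|x|) ≤ Real.exp (c*x) + Real.exp (-(c*x)) := by
  rcases le_or_gt 0 x with h | h
  · rw [abs_of_nonneg h]
    linarith [Real.exp_pos (-(c*x))]
  · rw [abs_of_neg h]
    have : c * -x = -(c*x) := by ring
    rw [this]
    linarith [Real.exp_pos (c*x)]

lemma aux_ys2_pointwise {a : ℝ} (ha0 : 0 < a) (x : ℝ) :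
    |a*x| * (Real.cosh (a*x) - 1)^2
      ≤ 30*a^5*(Real.exp ((1+2*a)*x) + Real.exp (-((1+2*a)*x))) := by
  set y := a*x with hy
  have hs0 : 0 ≤ Real.cosh y - 1 := by linarith [Real.one_le_cosh y]
  have hs : Real.cosh y - 1 ≤ y^2/2 * Real.exp |y| := aux_cosh_sub_one_le y
  have hs2 : (Real.cosh y - 1)^2 ≤ (y^2/2)^2 * Real.exp |y| ^ 2 := by
    calc (Real.cosh y - 1)^2 ≤ (y^2/2 * Real.exp |y|)^2 := by
          apply pow_le_pow_left₀ hs0 hs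
      _ = (y^2/2)^2 * Real.exp |y| ^ 2 := by rw [mul_pow]
  have he2 : Real.exp |y| ^ 2 = Real.exp (2*a*|x|) := by
    rw [sq, ← Real.exp_add, hy, abs_mul, abs_of_pos ha0]
    congr 1; ring
  have hy5 : |y|^5 = a^5 * |x|^5 := by
    rw [hy, abs_mul, abs_of_pos ha0, mul_pow]
  have hx5 : |x|^5 ≤ 120 * Real.exp |x| := aux_pow5_le (abs_nonneg x)
  have step1 : |y| * (Real.cosh y - 1)^2 ≤ |y|^5/4 * Real.exp (2*a*|x|) := by
    have h4 : |y| * (y^2/2)^2 = |y|^5/4 := by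
      rw [show (y^2/2)^2 = y^4/4 by ring]
      rw [show y^4 = |y|^4 by rw [← abs_pow, abs_of_nonneg (by positivity)]]
      ring
    calc |y| * (Real.cosh y - 1)^2 ≤ |y| * ((y^2/2)^2 * Real.exp |y| ^2) := by
          apply mul_le_mul_of_nonneg_left _ (abs_nonneg y)
          calc (Real.cosh y - 1)^2 ≤ (y^2/2)^2 * Real.exp |y| ^ 2 := hs2
            _ = (y^2/2)^2 * Real.exp |y| ^2 := rfl
      _ = |y| * (y^2/2)^2 * Real.exp |y|^2 := by ring
      _ = |y|^5/4 * Real.exp (2*a*|x|) := by rw [h4, he2]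
  have step2 : |y|^5/4 * Real.exp (2*a*|x|) ≤ 30*a^5 * Real.exp ((1+2*a)*|x|) := by
    rw [hy5]
    have : a^5 * |x|^5 / 4 ≤ 30 * a^5 * Real.exp |x| := by
      have := mul_le_mul_of_nonneg_left hx5 (by positivity : (0:ℝ) ≤ a^5/4)
      calc a^5 * |x|^5/4 = a^5/4 * |x|^5 := by ring
        _ ≤ a^5/4 * (120 * Real.exp |x|) := by
            apply mul_le_mul_of_nonneg_left hx5 (by positivity)
        _ = 30 * a^5 * Real.exp |x| := by ring
    calc a^5 * |x|^5/4 * Real.exp (2*a*|x|)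
        ≤ (30 * a^5 * Real.exp |x|) * Real.exp (2*a*|x|) := by
          apply mul_le_mul_of_nonneg_right this (Real.exp_pos _).le
      _ = 30*a^5 * Real.exp ((1+2*a)*|x|) := by
          rw [mul_assoc, ← Real.exp_add]
          congr 2; ring
  have step3 : Real.exp ((1+2*a)*|x|) ≤ Real.exp ((1+2*a)*x) + Real.exp (-((1+2*a)*x)) :=
    aux_exp_abs_le (1+2*a) x
  calc |y| * (Real.cosh y - 1)^2 ≤ 30*a^5 * Real.exp ((1+2*a)*|x|) := step1.trans step2
    _ ≤ 30*a^5*(Real.exp ((1+2*a)*x) + Real.exp (-((1+2*a)*x))) := by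
        have h30 : (0:ℝ) ≤ 30*a^5 := by positivity
        calc 30*a^5 * Real.exp ((1+2*a)*|x|)
            ≤ 30*a^5 * (Real.exp ((1+2*a)*x) + Real.exp (-((1+2*a)*x))) :=
              mul_le_mul_of_nonneg_left step3 h30
          _ = _ := rfl

lemma aux_integrable_ys2 {a : ℝ} (ha0 : 0 < a) :
    Integrable (fun x => |a*x| * (Real.cosh (a*x) - 1)^2) stdGauss := by
  have hint : Integrable (fun x => 30*a^5*(Real.exp ((1+2*a)*x) + Real.exp (-((1+2*a)*x)))) stdGauss := by
    have := ((aux_integrable_exp (1+2*a)).add (aux_integrable_exp (-(1+2*a)))).const_mul (30*a^5)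
    apply this.congr
    filter_upwards with x
    have hneg : (-(1+2*a))*x = -((1+2*a)*x) := by ring
    simp only [Pi.add_apply]
    rw [hneg]
  have hcont : Continuous (fun x => |a*x| * (Real.cosh (a*x) - 1)^2) := by
    apply Continuous.mul
    · exact (continuous_const.mul continuous_id).abs
    · exact ((Real.continuous_cosh.comp (continuous_const.mul continuous_id)).sub
        continuous_const).pow 2
  apply hint.mono' hcont.aestronglyMeasurable
  filter_upwards with x
  rw [Real.norm_eq_abs, abs_of_nonneg (by positivity)]
  exact aux_ys2_pointwise ha0 x

lemma aux_Y_bound {a : ℝ} (ha0 : 0 < a) (ha1 : a ≤ 1) :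
    ∫ x, |a*x| * (Real.cosh (a*x) - 1)^2 ∂stdGauss ≤ 60 * Real.exp (9/2) * a^5 := by
  have hint : Integrable (fun x => 30*a^5*(Real.exp ((1+2*a)*x) + Real.exp (-((1+2*a)*x)))) stdGauss := by
    have := ((aux_integrable_exp (1+2*a)).add (aux_integrable_exp (-(1+2*a)))).const_mul (30*a^5)
    apply this.congr
    filter_upwards with x
    have hneg : (-(1+2*a))*x = -((1+2*a)*x) := by ring
    simp only [Pi.add_apply]
    rw [hneg]
  have h1 : ∫ x, |a*x| * (Real.cosh (a*x) - 1)^2 ∂stdGauss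
      ≤ ∫ x, 30*a^5*(Real.exp ((1+2*a)*x) + Real.exp (-((1+2*a)*x))) ∂stdGauss := by
    apply integral_mono (aux_integrable_ys2 ha0) hint
    intro x
    exact aux_ys2_pointwise ha0 x
  have h2 : ∫ x, 30*a^5*(Real.exp ((1+2*a)*x) + Real.exp (-((1+2*a)*x))) ∂stdGauss
      = 30*a^5*(Real.exp ((1+2*a)^2/2) + Real.exp ((-(1+2*a))^2/2)) := by
    have hrw : (fun x : ℝ => 30*a^5*(Real.exp ((1+2*a)*x) + Real.exp (-((1+2*a)*x))))
        = fun x => 30*a^5*(Real.exp ((1+2*a)*x) + Real.exp ((-(1+2*a))*x)) := by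
      funext x; rw [neg_mul]
    rw [hrw, MeasureTheory.integral_const_mul,
      integral_add (aux_integrable_exp _) (aux_integrable_exp _),
      aux_integral_exp, aux_integral_exp]
  have h3 : Real.exp ((1+2*a)^2/2) ≤ Real.exp (9/2) := by
    apply Real.exp_le_exp.2
    nlinarith
  have h4 : Real.exp ((-(1+2*a))^2/2) ≤ Real.exp (9/2) := by
    apply Real.exp_le_exp.2
    nlinarith
  calc ∫ x, |a*x| * (Real.cosh (a*x) - 1)^2 ∂stdGauss
      ≤ 30*a^5*(Real.exp ((1+2*a)^2/2) + Real.exp ((-(1+2*a))^2/2)) := h1.trans (le_of_eq h2)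
    _ ≤ 30*a^5*(Real.exp (9/2) + Real.exp (9/2)) := by
        apply mul_le_mul_of_nonneg_left (by linarith) (by positivity)
    _ = 60 * Real.exp (9/2) * a^5 := by ring

lemma aux_E_bound {ζ a : ℝ} (hζ0 : 0 < ζ) (hζ1 : ζ < 1) (ha0 : 0 < a) (ha1 : a ≤ 1) :
    ∫ x, Real.cosh (a*x) ^ ζ ∂stdGauss
      ≤ 1 + ζ*(Real.exp (a^2/2) - 1)
        - (ζ*(1-ζ)/2) * ((Real.exp ((2*a)^2/2)/2 - 2*Real.exp (a^2/2) + 3/2)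
            - 2*(60 * Real.exp (9/2) * a^5)) := by
  set c := ζ*(1-ζ)/2 with hc
  have hc0 : 0 ≤ c := by rw [hc]; nlinarith
  -- the majorant U
  have hg1 : Integrable (fun x => 1 + ζ*(Real.cosh (a*x) - 1)) stdGauss := by
    have : Integrable (fun x => ζ*(Real.cosh (a*x) - 1)) stdGauss := by
      simpa using ((aux_integrable_cosh a).sub (integrable_const 1)).const_mul ζ
    simpa using (integrable_const (1:ℝ)).add this
  have hg2 : Integrable (fun x => (Real.cosh (a*x) - 1)^2
      - 2*(|a*x| * (Real.cosh (a*x) - 1)^2)) stdGauss := by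
    apply (aux_integrable_s2 a).sub
    simpa using (aux_integrable_ys2 ha0).const_mul 2
  have hU : Integrable (fun x => (1 + ζ*(Real.cosh (a*x) - 1))
      - c * ((Real.cosh (a*x) - 1)^2 - 2*(|a*x| * (Real.cosh (a*x) - 1)^2))) stdGauss := by
    apply hg1.sub
    simpa using hg2.const_mul c
  have hmono : ∫ x, Real.cosh (a*x) ^ ζ ∂stdGauss
      ≤ ∫ x, ((1 + ζ*(Real.cosh (a*x) - 1))
        - c * ((Real.cosh (a*x) - 1)^2 - 2*(|a*x| * (Real.cosh (a*x) - 1)^2))) ∂stdGauss := by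
    apply integral_mono (aux_integrable_coshrpow hζ0 hζ1 a) hU
    intro x
    have hb2 := aux_bernoulli2 hζ0 hζ1 (Real.one_le_cosh (a*x))
    have := aux_pointwise hζ0 hζ1 (a*x) (by rw [hc] at *; exact hb2)
    simpa [hc] using this
  have hlin : ∫ x, ((1 + ζ*(Real.cosh (a*x) - 1))
        - c * ((Real.cosh (a*x) - 1)^2 - 2*(|a*x| * (Real.cosh (a*x) - 1)^2))) ∂stdGauss
      = (1 + ζ*(Real.exp (a^2/2) - 1))
        - c * ((Real.exp ((2*a)^2/2)/2 - 2*Real.exp (a^2/2) + 3/2)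
            - 2*(∫ x, |a*x| * (Real.cosh (a*x) - 1)^2 ∂stdGauss)) := by
    rw [integral_sub hg1 (by simpa using hg2.const_mul c)]
    congr 1
    · -- ∫ (1 + ζ(cosh-1))
      rw [integral_add (integrable_const _)
          (by simpa using ((aux_integrable_cosh a).sub (integrable_const 1)).const_mul ζ)]
      rw [integral_const]
      simp only [probReal_univ, one_smul]
      congr 1
      rw [MeasureTheory.integral_const_mul, integral_sub (aux_integrable_cosh a) (integrable_const 1),
        aux_integral_cosh, integral_const]
      simp
    · -- c * ∫ (s² - 2|y|s²)
      rw [MeasureTheory.integral_const_mul]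
      congr 1
      rw [integral_sub (aux_integrable_s2 a) (by simpa using (aux_integrable_ys2 ha0).const_mul 2),
        aux_integral_s2, MeasureTheory.integral_const_mul]
  have hY := aux_Y_bound ha0 ha1
  calc ∫ x, Real.cosh (a*x) ^ ζ ∂stdGauss
      ≤ (1 + ζ*(Real.exp (a^2/2) - 1))
        - c * ((Real.exp ((2*a)^2/2)/2 - 2*Real.exp (a^2/2) + 3/2)
            - 2*(∫ x, |a*x| * (Real.cosh (a*x) - 1)^2 ∂stdGauss)) := hmono.trans (le_of_eq hlin)
    _ ≤ 1 + ζ*(Real.exp (a^2/2) - 1)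
        - c * ((Real.exp ((2*a)^2/2)/2 - 2*Real.exp (a^2/2) + 3/2)
            - 2*(60 * Real.exp (9/2) * a^5)) := by nlinarith [hY, hc0]

set_option maxHeartbeats 1000000 in
lemma aux_key_ineq {ζ γ a : ℝ} (hζ0 : 0 < ζ) (hζ1 : ζ < 1) (hγ : 1/2 < γ^2)
    (ha0 : 0 < a) (ha1 : a ≤ 1)
    (hsmall : (1 + 15*Real.exp (9/2)) * a < ζ*(1-ζ)/2 * ((2*γ^2 - 1)/(4*γ^2))) :
    1 + ζ*(Real.exp (a^2/2) - 1)
      - (ζ*(1-ζ)/2) * ((Real.exp ((2*a)^2/2)/2 - 2*Real.exp (a^2/2) + 3/2)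
          - 2*(60 * Real.exp (9/2) * a^5))
    < Real.exp (ζ*(a^2/2) - (ζ*(1-ζ)/(8*γ^2))*a^4) := by
  have hγ0 : (0:ℝ) < γ^2 := by linarith
  obtain ⟨T, hT⟩ : ∃ x, x = a^2 := ⟨_, rfl⟩
  obtain ⟨c, hc⟩ : ∃ x, x = ζ*(1-ζ)/2 := ⟨_, rfl⟩
  obtain ⟨β, hβ⟩ : ∃ x, x = ζ*(1-ζ)/(8*γ^2) := ⟨_, rfl⟩
  obtain ⟨M, hM⟩ : ∃ x, x = ζ*(1-ζ)/2 * ((2*γ^2 - 1)/(4*γ^2)) := ⟨_, rfl⟩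
  rw [← hM] at hsmall
  rw [← hc, ← hβ, ← hT]
  rw [show (2*a)^2/2 = 2*T by rw [hT]; ring, show a^4 = T^2 by rw [hT]; ring]
  have hzz : 0 < ζ*(1-ζ) := mul_pos hζ0 (by linarith)
  have hzz4 : ζ*(1-ζ) ≤ 1/4 := by nlinarith [sq_nonneg (ζ - 1/2)]
  have hc0 : 0 < c := by rw [hc]; linarith
  have hc8 : c ≤ 1/8 := by rw [hc]; linarith
  have hβeq : β * (8*γ^2) = ζ*(1-ζ) := by rw [hβ, div_mul_cancel₀ _ (by positivity)]
  have hβ0 : 0 < β := by rw [hβ]; exact div_pos hzz (by positivity)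
  have hβ4 : β ≤ ζ/4 := by nlinarith [mul_lt_mul_of_pos_left hγ hβ0, sq_nonneg ζ]
  have hβ16 : β ≤ 1/16 := by nlinarith [mul_lt_mul_of_pos_left hγ hβ0]
  have hMeq : c/2 - β = M := by
    have hγne : γ ≠ 0 := (by rintro rfl; norm_num at hγ0)
    rw [hc, hβ, hM]; field_simp; ring
  have hT0 : 0 < T := by rw [hT]; positivity
  have hT1 : T ≤ 1 := by rw [hT]; nlinarith
  obtain ⟨v, hv⟩ : ∃ x, x = ζ*(T/2) - β*T^2 := ⟨_, rfl⟩
  rw [← hv]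
  have hv0 : 0 ≤ v := by
    rw [hv]
    have k1 : β*T^2 ≤ ζ/4*T^2 := mul_le_mul_of_nonneg_right hβ4 (by positivity)
    have hTT : T^2 ≤ T := by nlinarith
    have k2 : ζ/4*T^2 ≤ ζ/4*T := by nlinarith
    have k3 : 0 ≤ ζ*T := (mul_pos hζ0 hT0).le
    linarith
  -- series bounds
  have b1' : Real.exp (T/2) ≤ 1 + T/2 + T^2/8 + T^3/36 := by
    have h := Real.exp_bound' (by positivity : (0:ℝ) ≤ T/2) (by linarith : T/2 ≤ 1)
      (by norm_num : 0 < 3)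
    have hs : (∑ m ∈ Finset.range 3, (T/2) ^ m / m.factorial) = 1 + T/2 + T^2/8 := by
      norm_num [Finset.sum_range_succ, Nat.factorial]
      try ring
    rw [hs] at h
    have he : ((T/2)^3 * ((3:ℕ)+1) / ((Nat.factorial 3 : ℕ) * (3:ℕ)) : ℝ) = T^3/36 := by
      norm_num [Nat.factorial]
      try ring
    calc Real.exp (T/2)
        ≤ 1 + T/2 + T^2/8 + ((T/2)^3 * ((3:ℕ)+1)/((Nat.factorial 3 : ℕ) * (3:ℕ)) : ℝ) := h
      _ = 1 + T/2 + T^2/8 + T^3/36 := by rw [he]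
  have b2 : 1 + 2*T + 2*T^2 ≤ Real.exp (2*T) := by
    have h := Real.sum_le_exp_of_nonneg (by positivity : (0:ℝ) ≤ 2*T) 3
    have hs : (∑ i ∈ Finset.range 3, (2*T) ^ i / i.factorial) = 1 + 2*T + 2*T^2 := by
      norm_num [Finset.sum_range_succ, Nat.factorial]
      try ring
    rwa [hs] at h
  have b3 : 1 + v + v^2/2 ≤ Real.exp v := by
    have h := Real.sum_le_exp_of_nonneg hv0 3
    have hs : (∑ i ∈ Finset.range 3, v ^ i / i.factorial) = 1 + v + v^2/2 := by
      norm_num [Finset.sum_range_succ, Nat.factorial]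
      try ring
    rwa [hs] at h
  have he1 : (1:ℝ) ≤ Real.exp (9/2) := Real.one_le_exp (by norm_num)
  have he0 : (0:ℝ) < Real.exp (9/2) := Real.exp_pos _
  have ha5 : (0:ℝ) < a^5 := by positivity
  have hinner : (3:ℝ)/4*T^2 - T^3/18 ≤ Real.exp (2*T)/2 - 2*Real.exp (T/2) + 3/2 := by
    linarith
  have stepA : c*((3:ℝ)/4*T^2 - T^3/18 - 2*(60 * Real.exp (9/2) * a^5))
      ≤ c*((Real.exp (2*T)/2 - 2*Real.exp (T/2) + 3/2) - 2*(60 * Real.exp (9/2) * a^5)) := by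
    apply mul_le_mul_of_nonneg_left _ hc0.le
    linarith
  have stepB : ζ*(Real.exp (T/2) - 1) ≤ ζ*(T/2 + T^2/8 + T^3/36) := by
    apply mul_le_mul_of_nonneg_left _ hζ0.le
    linarith
  have hT3 : T^3 = a^6 := by rw [hT]; ring
  have ha65 : a^6 ≤ a^5 := by nlinarith [pow_pos ha0 5]
  have hfin : T^3*(ζ/36 + c/18 + β) + 120*c*Real.exp (9/2)*a^5 < M*T^2 := by
    have hcoef : ζ/36 + c/18 + β ≤ 1 := by linarith
    have h1 : T^3*(ζ/36 + c/18 + β) ≤ a^5 := by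
      calc T^3*(ζ/36 + c/18 + β) ≤ T^3*1 :=
            mul_le_mul_of_nonneg_left hcoef (by positivity)
        _ = a^6 := by rw [mul_one, hT3]
        _ ≤ a^5 := ha65
    have h120 : 120*c ≤ 15 := by linarith
    have h2 : 120*c*Real.exp (9/2)*a^5 ≤ 15*Real.exp (9/2)*a^5 := by
      have k1 : 120*c*Real.exp (9/2) ≤ 15*Real.exp (9/2) :=
        mul_le_mul_of_nonneg_right h120 he0.le
      exact mul_le_mul_of_nonneg_right k1 ha5.le
    have h3 : (1 + 15*Real.exp (9/2))*a^5 < M*a^4 := by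
      have k := mul_lt_mul_of_pos_right hsmall (by positivity : (0:ℝ) < a^4)
      calc (1 + 15*Real.exp (9/2))*a^5 = (1 + 15*Real.exp (9/2))*a*a^4 := by ring
        _ < M*a^4 := k
    have hMT2 : M*a^4 = M*T^2 := by rw [hT]; ring
    linarith
  have h7 : ζ^2*T^2/8 - β*T^3 ≤ v^2/2 := by
    rw [hv]
    nlinarith [sq_nonneg (β*T^2), mul_pos hβ0 (pow_pos hT0 3), mul_pos hζ0 hT0]
  have hzcT : (ζ - ζ^2)*T^2 = 2*c*T^2 := by rw [hc]; ring
  have hMT : (c/2 - β)*T^2 = M*T^2 := by rw [hMeq]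
  have hpoly : 1 + ζ*(T/2 + T^2/8 + T^3/36) - c*((3:ℝ)/4*T^2 - T^3/18
        - 2*(60 * Real.exp (9/2) * a^5)) < 1 + v + v^2/2 := by
    linarith [hfin, h7, hv, hzcT, hMT]
  calc 1 + ζ*(Real.exp (T/2) - 1)
      - c * ((Real.exp (2*T)/2 - 2*Real.exp (T/2) + 3/2) - 2*(60 * Real.exp (9/2) * a^5))
      ≤ 1 + ζ*(T/2 + T^2/8 + T^3/36)
        - c*((3:ℝ)/4*T^2 - T^3/18 - 2*(60 * Real.exp (9/2) * a^5)) := by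
        linarith
    _ < 1 + v + v^2/2 := hpoly
    _ ≤ Real.exp v := b3

/-- The one-step replica symmetry breaking functional
`f(x) = log 2 + ζ⁻¹ log E_η[cosh^ζ(ηγ√(2x))] + (γ²/2)(1 − 2x + (1−ζ)x²)`. -/
def fRSB (ζ γ : ℝ) (x : ℝ) : ℝ :=
  Real.log 2 +
    ζ⁻¹ * Real.log (∫ η, (Real.cosh (η * γ * Real.sqrt (2 * x))) ^ ζ ∂ stdGauss) +
    γ ^ 2 / 2 * (1 - 2 * x + (1 - ζ) * x ^ 2)


lemma aux_integrand_rw (ζ γ x : ℝ) :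
    (fun η => (Real.cosh (η * γ * Real.sqrt (2 * x))) ^ ζ)
      = fun η => (Real.cosh ((γ * Real.sqrt (2 * x)) * η)) ^ ζ := by
  funext η
  rw [show η * γ * Real.sqrt (2*x) = (γ * Real.sqrt (2*x)) * η by ring]

lemma fRSB_zero (ζ γ : ℝ) (hζ0 : 0 < ζ) : fRSB ζ γ 0 = Real.log 2 + γ ^ 2 / 2 := by
  rw [fRSB]
  have h0 : (fun η : ℝ => (Real.cosh (η * γ * Real.sqrt (2 * 0))) ^ ζ) = fun _ => (1:ℝ) := by
    funext η
    rw [mul_zero, Real.sqrt_zero, mul_zero, Real.cosh_zero, Real.one_rpow]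
  rw [h0]
  rw [integral_const]
  simp only [probReal_univ, one_smul, smul_eq_mul, mul_one]
  rw [Real.log_one, mul_zero]
  ring

set_option maxHeartbeats 2000000 in
/-- **(The annealed value is strictly beaten at low temperature.)** If `γ² > 1/2` then
`inf_{x∈[0,1]} f(x) < log 2 + γ²/2 = f(0)`. -/
theorem oneRSB_beats_annealed (ζ γ : ℝ) (hζ : ζ ∈ Set.Ioo (0:ℝ) 1) (hγ : 0 < γ)
    (hlow : 1 / 2 < γ ^ 2) :
    sInf (fRSB ζ γ '' Set.Icc 0 1) < Real.log 2 + γ ^ 2 / 2 ∧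
      fRSB ζ γ 0 = Real.log 2 + γ ^ 2 / 2 := by
  obtain ⟨hζ0, hζ1⟩ := hζ
  have hγ2 : (0:ℝ) < γ^2 := by linarith
  refine ⟨?_, fRSB_zero ζ γ hζ0⟩
  -- choose a
  have hzz : 0 < ζ*(1-ζ) := mul_pos hζ0 (by linarith)
  have hM0 : 0 < ζ*(1-ζ)/2 * ((2*γ^2 - 1)/(4*γ^2)) := by
    apply mul_pos (by linarith)
    apply div_pos (by linarith) (by positivity)
  have hK0 : (0:ℝ) < 1 + 15*Real.exp (9/2) := by positivity
  obtain ⟨M, hMdef⟩ : ∃ x, x = ζ*(1-ζ)/2 * ((2*γ^2 - 1)/(4*γ^2)) := ⟨_, rfl⟩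
  obtain ⟨K, hKdef⟩ : ∃ x, x = 1 + 15*Real.exp (9/2) := ⟨_, rfl⟩
  rw [← hMdef] at hM0
  rw [← hKdef] at hK0
  obtain ⟨a, hadef⟩ : ∃ x, x = min 1 (M/K) / 2 := ⟨_, rfl⟩
  have hMK0 : 0 < M/K := div_pos hM0 hK0
  have ha0 : 0 < a := by rw [hadef]; positivity
  have ha1 : a ≤ 1 := by
    rw [hadef]
    have := min_le_left 1 (M/K)
    linarith
  have hsmall : K * a < M := by
    have h1 : a < M/K := by
      rw [hadef]
      have := min_le_right 1 (M/K)
      linarith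
    calc K * a < K * (M/K) := by exact mul_lt_mul_of_pos_left h1 hK0
      _ = M := by field_simp
  -- the point δ
  obtain ⟨δ, hδdef⟩ : ∃ x, x = a^2/(2*γ^2) := ⟨_, rfl⟩
  have hδ0 : 0 < δ := by rw [hδdef]; positivity
  have hδ1 : δ ≤ 1 := by
    rw [hδdef, div_le_one (by positivity)]
    nlinarith
  have hδmem : δ ∈ Set.Icc (0:ℝ) 1 := ⟨hδ0.le, hδ1⟩
  -- rewrite the integrand at δ
  have hsq : γ * Real.sqrt (2*δ) = a := by
    rw [hδdef, show 2*(a^2/(2*γ^2)) = (a/γ)^2 by field_simp, Real.sqrt_sq (by positivity)]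
    field_simp
  -- the integral at δ
  have hrw : (fun η => (Real.cosh (η * γ * Real.sqrt (2 * δ))) ^ ζ)
      = fun η => (Real.cosh (a * η)) ^ ζ := by
    rw [aux_integrand_rw, hsq]
  have hE1 : 1 ≤ ∫ x, Real.cosh (a*x) ^ ζ ∂stdGauss := aux_one_le_integral_coshrpow hζ0 hζ1 a
  have hEb := aux_E_bound hζ0 hζ1 ha0 ha1
  have hkey := aux_key_ineq hζ0 hζ1 hlow ha0 ha1 (by rw [← hMdef, ← hKdef]; exact hsmall)

  have hElt : ∫ x, Real.cosh (a*x) ^ ζ ∂stdGauss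
      < Real.exp (ζ*(a^2/2) - (ζ*(1-ζ)/(8*γ^2))*a^4) := lt_of_le_of_lt hEb hkey
  have hlog : Real.log (∫ x, Real.cosh (a*x) ^ ζ ∂stdGauss)
      < ζ*(a^2/2) - (ζ*(1-ζ)/(8*γ^2))*a^4 := by
    have := Real.log_lt_log (by linarith : (0:ℝ) < ∫ x, Real.cosh (a*x) ^ ζ ∂stdGauss) hElt
    rwa [Real.log_exp] at this
  -- f(δ) < log 2 + γ²/2
  have hfδ : fRSB ζ γ δ < Real.log 2 + γ^2/2 := by
    rw [fRSB, hrw]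
    have hinv : (0:ℝ) < ζ⁻¹ := by positivity
    have h2 : ζ⁻¹ * Real.log (∫ x, Real.cosh (a*x) ^ ζ ∂stdGauss)
        < ζ⁻¹ * (ζ*(a^2/2) - (ζ*(1-ζ)/(8*γ^2))*a^4) := by
      exact mul_lt_mul_of_pos_left hlog hinv
    have hident : ζ⁻¹ * (ζ*(a^2/2) - (ζ*(1-ζ)/(8*γ^2))*a^4)
        + γ^2/2 * (1 - 2*δ + (1-ζ)*δ^2) = γ^2/2 := by
      rw [hδdef]
      field_simp
      ring
    linarith
  -- conclude via sInf
  have hbdd : BddBelow (fRSB ζ γ '' Set.Icc 0 1) := by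
    refine ⟨Real.log 2 - γ^2/2, ?_⟩
    rintro y ⟨x, hx, rfl⟩
    rw [fRSB, aux_integrand_rw]
    have hE1x : 1 ≤ ∫ η, Real.cosh ((γ * Real.sqrt (2*x)) * η) ^ ζ ∂stdGauss :=
      aux_one_le_integral_coshrpow hζ0 hζ1 _
    have hlog0 : 0 ≤ Real.log (∫ η, Real.cosh ((γ * Real.sqrt (2*x)) * η) ^ ζ ∂stdGauss) :=
      Real.log_nonneg hE1x
    have hinv : (0:ℝ) ≤ ζ⁻¹ := by positivity
    have hq : -(1:ℝ) ≤ 1 - 2*x + (1-ζ)*x^2 := by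
      obtain ⟨hx0, hx1⟩ := hx
      nlinarith
    have hq2 : -(γ^2/2) ≤ γ^2/2 * (1 - 2*x + (1-ζ)*x^2) := by nlinarith
    have := mul_nonneg hinv hlog0
    linarith
  have hle : sInf (fRSB ζ γ '' Set.Icc 0 1) ≤ fRSB ζ γ δ :=
    csInf_le hbdd ⟨δ, hδmem, rfl⟩
  linarith
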